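/- If a sequent Γ ⇒ Δ is provable in Grz∞+cut, then it is provable in Grz∞ (the non-well-founded calculus without cut). -/

import Mathlib

/-- Modal formulas of the Grzegorczyk logic: ⊥, atoms, →, □. -/
inductive Formula : Type
  | bot : Formula
  | atom : ℕ → Formula
  | imp : Formula → Formula → Formula
  | box : Formula → Formula
deriving DecidableEq

/-- A sequent Γ ⇒ Δ is a pair of finite multisets of formulas. -/
abbrev Sequent : Type := Multiset Formula × Multiset Formula

/-- Names of the inference rules of Grz∞ + cut (including the two kinds of initial sequents). -/
inductive Rule : Type
  | ax | axBot | impL | impR | refl | box | cut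
deriving DecidableEq

/-- □Π for a multiset Π. -/
def boxed (P : Multiset Formula) : Multiset Formula := P.map Formula.box

/-- `Inst r s p₁ p₂` : the rule `r` has a (correct) instance with conclusion `s`,
first premise `p₁` and second premise `p₂` (`none` = no such premise). -/
inductive Inst : Rule → Sequent → Option Sequent → Option Sequent → Prop
  | ax (Γ Δ : Multiset Formula) (p : ℕ) :
      Inst .ax (Formula.atom p ::ₘ Γ, Formula.atom p ::ₘ Δ) none none
  | axBot (Γ Δ : Multiset Formula) :
      Inst .axBot (Formula.bot ::ₘ Γ, Δ) none none
  | impL (Γ Δ : Multiset Formula) (A B : Formula) :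
      Inst .impL (Formula.imp A B ::ₘ Γ, Δ) (some (B ::ₘ Γ, Δ)) (some (Γ, A ::ₘ Δ))
  | impR (Γ Δ : Multiset Formula) (A B : Formula) :
      Inst .impR (Γ, Formula.imp A B ::ₘ Δ) (some (A ::ₘ Γ, B ::ₘ Δ)) none
  | refl (Γ Δ : Multiset Formula) (A : Formula) :
      Inst .refl (Formula.box A ::ₘ Γ, Δ) (some (A ::ₘ Formula.box A ::ₘ Γ, Δ)) none
  | box (Γ Δ : Multiset Formula) (A : Formula) (P : Multiset Formula) :
      Inst .box (Γ + boxed P, Formula.box A ::ₘ Δ) (some (Γ + boxed P, A ::ₘ Δ))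
        (some (boxed P, {A}))
  | cut (Γ Δ : Multiset Formula) (A : Formula) :
      Inst .cut (Γ, Δ) (some (Γ, A ::ₘ Δ)) (some (A ::ₘ Γ, Δ))

/-- A labelling of tree addresses (lists of booleans; `true` = second/right child)
by a rule name together with a sequent; `none` means the address is outside the tree. -/
abbrev Lab : Type := List Bool → Option (Rule × Sequent)

/-- The labelling of the subtree at child `i`. -/
def shift (i : Bool) (l : Lab) : Lab := fun a => l (i :: a)

/-- An ∞-proof in Grz∞ + cut: a possibly infinite tree of sequents built according to
the rules, in which every infinite branch passes through the right premise of the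
rule (□) infinitely many times. -/
structure InfProof : Type where
  lab : Lab
  root_some : (lab []).isSome
  nojunk : ∀ (a : List Bool) (i : Bool), lab a = none → lab (a ++ [i]) = none
  step : ∀ (a : List Bool) (r : Rule) (s : Sequent), lab a = some (r, s) →
      Inst r s ((lab (a ++ [false])).map Prod.snd) ((lab (a ++ [true])).map Prod.snd)
  branch : ∀ f : ℕ → Bool, (∀ n : ℕ, (lab ((List.range n).map f)).isSome) →
      ∀ N : ℕ, ∃ n : ℕ, N ≤ n ∧ f n = true ∧
        (lab ((List.range n).map f)).map Prod.fst = some Rule.box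

/-- The sequent at the root of an ∞-proof. -/
def rootSeq (π : InfProof) : Sequent := ((π.lab []).map Prod.snd).getD (0, 0)

/-- `Proves π S` : the ∞-proof `π` is an ∞-proof of the sequent `S`. -/
def Proves (π : InfProof) (S : Sequent) : Prop := ∃ r : Rule, π.lab [] = some (r, S)

/-- An ∞-proof contains no application of the cut rule (i.e. it is a proof of Grz∞). -/
def NoCut (π : InfProof) : Prop := ∀ (a : List Bool) (r : Rule) (s : Sequent),
  π.lab a = some (r, s) → r ≠ Rule.cut

/-- Membership of an address in the main fragment: no proper passage through a
right premise of (□) strictly below it. -/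
def InMain (l : Lab) (a : List Bool) : Prop :=
  (l a).isSome ∧ ∀ (b c : List Bool), a = b ++ true :: c →
    (l b).map Prod.fst = some Rule.box → c = []

/-- The local height |π| : the length of the longest branch in the main fragment. -/
noncomputable def height (l : Lab) : ℕ := sSup {n : ℕ | ∃ a : List Bool, InMain l a ∧ a.length = n}

/-- The relations ∼ₙ on ∞-proofs (presented on labellings), defined inductively:
π ∼₀ τ always; a single-node proof is ∼ₙ-related to itself; proofs ending in the same
instance of (→L), (cut), (→R), (refl) are ∼ₙ-related when their immediate subproofs are;
proofs ending in the same instance of (□) are ∼ₙ₊₁-related when the left-premise subproofs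
are ∼ₙ₊₁-related and the right-premise subproofs are ∼ₙ-related. -/
inductive Sim : ℕ → Lab → Lab → Prop
  | zero (l m : Lab) : Sim 0 l m
  | leaf (n : ℕ) (l : Lab) : height l = 0 → Sim n l l
  | bin (n : ℕ) (l m : Lab) (r : Rule) (s : Sequent) :
      (r = Rule.impL ∨ r = Rule.cut) →
      l [] = some (r, s) → m [] = some (r, s) →
      (l [false]).map Prod.snd = (m [false]).map Prod.snd →
      (l [true]).map Prod.snd = (m [true]).map Prod.snd →
      Sim n (shift false l) (shift false m) → Sim n (shift true l) (shift true m) →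
      Sim n l m
  | un (n : ℕ) (l m : Lab) (r : Rule) (s : Sequent) :
      (r = Rule.impR ∨ r = Rule.refl) →
      l [] = some (r, s) → m [] = some (r, s) →
      (l [false]).map Prod.snd = (m [false]).map Prod.snd →
      Sim n (shift false l) (shift false m) →
      Sim n l m
  | box (n : ℕ) (l m : Lab) (s : Sequent) :
      l [] = some (Rule.box, s) → m [] = some (Rule.box, s) →
      (l [false]).map Prod.snd = (m [false]).map Prod.snd →
      (l [true]).map Prod.snd = (m [true]).map Prod.snd →
      Sim (n + 1) (shift false l) (shift false m) → Sim n (shift true l) (shift true m) →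
      Sim (n + 1) l m

/-- The sets 𝒫ₙ of ∞-proofs (presented on labellings), defined inductively:
𝒫₀ is everything; single-node proofs are in every 𝒫ₙ; (→L), (→R), (refl) preserve
membership in 𝒫ₙ; a proof ending in (□) with left-premise subproof in 𝒫ₙ₊₁ and
right-premise subproof in 𝒫ₙ is in 𝒫ₙ₊₁. -/
inductive MemP : ℕ → Lab → Prop
  | zero (l : Lab) : MemP 0 l
  | leaf (n : ℕ) (l : Lab) : height l = 0 → MemP n l
  | bin (n : ℕ) (l : Lab) (s : Sequent) :
      l [] = some (Rule.impL, s) →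
      MemP n (shift false l) → MemP n (shift true l) → MemP n l
  | un (n : ℕ) (l : Lab) (r : Rule) (s : Sequent) :
      (r = Rule.impR ∨ r = Rule.refl) →
      l [] = some (r, s) → MemP n (shift false l) → MemP n l
  | box (n : ℕ) (l : Lab) (s : Sequent) :
      l [] = some (Rule.box, s) →
      MemP (n + 1) (shift false l) → MemP n (shift true l) → MemP (n + 1) l

/- The metric d(π,τ) = 2^(−sup{n : π ∼ₙ τ}), with 2^(−∞) = 0. -/
open Classical in
noncomputable def pdist (π τ : InfProof) : ℝ :=
  if ∀ n : ℕ, Sim n π.lab τ.lab then 0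
  else (2 : ℝ) ^ (-((sSup {n : ℕ | Sim n π.lab τ.lab} : ℕ) : ℤ))

/-- A mapping on ∞-proofs is nonexpansive if it preserves all relations ∼ₙ. -/
def Nonexpansive (f : InfProof → InfProof) : Prop :=
  ∀ (n : ℕ) (π τ : InfProof), Sim n π.lab τ.lab → Sim n (f π).lab (f τ).lab

/-- A mapping is adequate if it is nonexpansive, maps 𝒫₁ into 𝒫₁,
and does not increase local height. -/
def Adequate (f : InfProof → InfProof) : Prop :=
  Nonexpansive f ∧ (∀ π : InfProof, MemP 1 π.lab → MemP 1 (f π).lab) ∧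
    ∀ π : InfProof, height (f π).lab ≤ height π.lab

/-- The set 𝒫₁ of ∞-proofs whose main fragment is cut-free, as a subtype. -/
abbrev P1 : Type := {π : InfProof // MemP 1 π.lab}

/-- An A-reducing mapping: a nonexpansive map ℛ : 𝒫₁ × 𝒫₁ → 𝒫₁ such that
ℛ(π′,π″) proves Γ ⇒ Δ whenever π′ proves Γ ⇒ Δ, A and π″ proves A, Γ ⇒ Δ. -/
def Reducing (A : Formula) (R : P1 → P1 → P1) : Prop :=
  (∀ (n : ℕ) (p₁ p₂ q₁ q₂ : P1), Sim n p₁.1.lab q₁.1.lab → Sim n p₂.1.lab q₂.1.lab →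
      Sim n (R p₁ p₂).1.lab (R q₁ q₂).1.lab) ∧
  ∀ (p₁ p₂ : P1) (Γ Δ : Multiset Formula),
    Proves p₁.1 (Γ, A ::ₘ Δ) → Proves p₂.1 (A ::ₘ Γ, Δ) → Proves (R p₁ p₂).1 (Γ, Δ)

/-- A mapping is root-preserving if it maps ∞-proofs to ∞-proofs of the same sequent. -/
def RootPres (f : InfProof → InfProof) : Prop :=
  ∀ (π : InfProof) (S : Sequent), Proves π S → Proves (f π) S

/-- The uniform distance on mappings of ∞-proofs. -/
noncomputable def udist (U V : InfProof → InfProof) : ℝ :=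
  ⨆ π : InfProof, pdist (U π) (V π)

/- The immediate subproof of `π` at child `i` (junk value `π` if there is none). -/
open Classical in
noncomputable def subtree (π : InfProof) (i : Bool) : InfProof :=
  if h : ∃ τ : InfProof, τ.lab = shift i π.lab then h.choose else π

/-- `IsFOp E F` : `F` is the operator ℱ (relative to the one-step cut-elimination map
`E` = ℰ*) defined by: on proofs with cut-free main fragment it commutes with the last
rule, applying `U` at right premises of (□) and fixing single-node proofs; on other
proofs it first applies `E`. -/
def IsFOp (E : InfProof → InfProof) (F : (InfProof → InfProof) → InfProof → InfProof) : Prop :=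
  ∀ (U : InfProof → InfProof) (π : InfProof),
    (MemP 1 π.lab → height π.lab = 0 → F U π = π) ∧
    (∀ (r : Rule) (s : Sequent), MemP 1 π.lab → π.lab [] = some (r, s) →
        r ≠ Rule.box → r ≠ Rule.cut → height π.lab ≠ 0 →
        (F U π).lab [] = some (r, s) ∧
        shift false (F U π).lab = (F U (subtree π false)).lab ∧
        (r = Rule.impL → shift true (F U π).lab = (F U (subtree π true)).lab)) ∧
    (∀ s : Sequent, MemP 1 π.lab → π.lab [] = some (Rule.box, s) →
        (F U π).lab [] = some (Rule.box, s) ∧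
        shift false (F U π).lab = (F U (subtree π false)).lab ∧
        shift true (F U π).lab = (U (subtree π true)).lab) ∧
    (¬ MemP 1 π.lab → F U π = F U (E π))

/-- Membership in 𝒩ₙ : a root-preserving nonexpansive map whose image lies in 𝒫ₙ. -/
def InN (n : ℕ) (U : InfProof → InfProof) : Prop :=
  Nonexpansive U ∧ RootPres U ∧ ∀ π : InfProof, MemP n (U π).lab

/-- The finitary sequent calculus Grz_Seq (with cut allowed iff the flag is `true`). -/
inductive GrzSeq : Bool → Sequent → Prop
  | ax (c : Bool) (Γ Δ : Multiset Formula) (A : Formula) :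
      GrzSeq c (A ::ₘ Γ, A ::ₘ Δ)
  | bot (c : Bool) (Γ Δ : Multiset Formula) :
      GrzSeq c (Formula.bot ::ₘ Γ, Δ)
  | impL (c : Bool) (Γ Δ : Multiset Formula) (A B : Formula) :
      GrzSeq c (B ::ₘ Γ, Δ) → GrzSeq c (Γ, A ::ₘ Δ) →
      GrzSeq c (Formula.imp A B ::ₘ Γ, Δ)
  | impR (c : Bool) (Γ Δ : Multiset Formula) (A B : Formula) :
      GrzSeq c (A ::ₘ Γ, B ::ₘ Δ) → GrzSeq c (Γ, Formula.imp A B ::ₘ Δ)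
  | refl (c : Bool) (Γ Δ : Multiset Formula) (B : Formula) :
      GrzSeq c (B ::ₘ Formula.box B ::ₘ Γ, Δ) → GrzSeq c (Formula.box B ::ₘ Γ, Δ)
  | grz (c : Bool) (Γ Δ : Multiset Formula) (A : Formula) (P : Multiset Formula) :
      GrzSeq c (Formula.box (Formula.imp A (Formula.box A)) ::ₘ boxed P, {A}) →
      GrzSeq c (Γ + boxed P, Formula.box A ::ₘ Δ)
  | cut (Γ Δ : Multiset Formula) (A : Formula) :
      GrzSeq true (Γ, A ::ₘ Δ) → GrzSeq true (A ::ₘ Γ, Δ) → GrzSeq true (Γ, Δ)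

namespace CE

/-! ### Formula size and subformula closure -/

def fsize : Formula → ℕ
  | .bot => 1
  | .atom _ => 1
  | .imp A B => fsize A + fsize B + 1
  | .box A => fsize A + 1

def subf : Formula → Finset Formula
  | .bot => {.bot}
  | .atom p => {.atom p}
  | .imp A B => insert (.imp A B) (subf A ∪ subf B)
  | .box A => insert (.box A) (subf A)

lemma self_mem_subf (C : Formula) : C ∈ subf C := by
  cases C <;> simp [subf]

lemma subf_trans : ∀ (D C : Formula), C ∈ subf D → subf C ⊆ subf D := by
  intro D
  induction D with
  | bot => intro C hC; simp [subf] at hC; subst hC; simp [subf]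
  | atom p => intro C hC; simp [subf] at hC; subst hC; simp [subf]
  | imp A B ihA ihB =>
      intro C hC
      simp only [subf, Finset.mem_insert, Finset.mem_union] at hC
      rcases hC with rfl | h | h
      · exact fun x hx => hx
      · exact fun x hx => by
          simp only [subf, Finset.mem_insert, Finset.mem_union]
          exact Or.inr (Or.inl (ihA C h hx))
      · exact fun x hx => by
          simp only [subf, Finset.mem_insert, Finset.mem_union]
          exact Or.inr (Or.inr (ihB C h hx))
  | box A ihA =>
      intro C hC
      simp only [subf, Finset.mem_insert] at hC
      rcases hC with rfl | h
      · exact fun x hx => hx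
      · exact fun x hx => by
          simp only [subf, Finset.mem_insert]
          exact Or.inr (ihA C h hx)

/-! ### Kripke models : finite posets. -/

structure KM where
  W : Type
  fin : Finite W
  le : W → W → Prop
  le_refl : ∀ w, le w w
  le_trans : ∀ {a b c}, le a b → le b c → le a c
  le_antisymm : ∀ {a b}, le a b → le b a → a = b
  val : W → ℕ → Prop

def KM.sat (M : KM) : M.W → Formula → Prop
  | _, .bot => False
  | w, .atom p => M.val w p
  | w, .imp A B => M.sat w A → M.sat w B
  | w, .box A => ∀ v, M.le w v → M.sat v A

def Refutes (M : KM) (w : M.W) (s : Sequent) : Prop :=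
  (∀ C ∈ s.1, M.sat w C) ∧ (∀ C ∈ s.2, ¬ M.sat w C)

def Valid (s : Sequent) : Prop := ∀ (M : KM) (w : M.W), ¬ Refutes M w s

lemma not_valid_iff (s : Sequent) : ¬ Valid s ↔ ∃ (M : KM) (w : M.W), Refutes M w s := by
  unfold Valid; push_neg; rfl

end CE
namespace CE

/-! ### Part 1 : soundness of Grz∞ + cut over finite posets -/

def PInv (π : InfProof) (M : KM) (a : List Bool) (w : M.W) : Prop :=
  ∃ r s, π.lab a = some (r, s) ∧ Refutes M w s

lemma lab_child_of_map_snd {π : InfProof} {a : List Bool} {s' : Sequent}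
    (h : (π.lab a).map Prod.snd = some s') : ∃ r', π.lab a = some (r', s') := by
  rcases Option.map_eq_some_iff.mp h with ⟨p, hp, hsnd⟩
  exact ⟨p.1, by rw [hp, ← hsnd]⟩

lemma pstep {π : InfProof} {M : KM} {a : List Bool} {w : M.W} (hx : PInv π M a w) :
    ∃ (b : Bool) (w' : M.W), PInv π M (a ++ [b]) w' ∧ M.le w w' ∧
      ((b = true ∧ (π.lab a).map Prod.fst = some Rule.box) → w ≠ w') := by
  obtain ⟨r, s, hlab, href⟩ := hx
  have hstep := π.step a r s hlab
  generalize hF : (π.lab (a ++ [false])).map Prod.snd = oF at hstep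
  generalize hT : (π.lab (a ++ [true])).map Prod.snd = oT at hstep
  cases hstep with
  | ax Γ Δ p =>
      exact absurd (href.1 _ (Multiset.mem_cons_self _ _)) (href.2 _ (Multiset.mem_cons_self _ _))
  | axBot Γ Δ =>
      have := href.1 _ (Multiset.mem_cons_self _ _)
      simp [KM.sat] at this
  | impL Γ Δ A B =>
      have hAB := href.1 _ (Multiset.mem_cons_self _ _)
      simp only [KM.sat] at hAB
      by_cases hB : M.sat w B
      · obtain ⟨r', hr'⟩ := lab_child_of_map_snd hF
        refine ⟨false, w, ⟨r', _, hr', ?_, href.2⟩, M.le_refl w, by simp⟩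
        intro C hC
        rcases Multiset.mem_cons.mp hC with rfl | hC
        · exact hB
        · exact href.1 C (Multiset.mem_cons_of_mem hC)
      · have hA : ¬ M.sat w A := fun hA => hB (hAB hA)
        obtain ⟨r', hr'⟩ := lab_child_of_map_snd hT
        refine ⟨true, w, ⟨r', _, hr', fun C hC => href.1 C (Multiset.mem_cons_of_mem hC), ?_⟩,
          M.le_refl w, ?_⟩
        · intro C hC
          rcases Multiset.mem_cons.mp hC with rfl | hC
          · exact hA
          · exact href.2 C hC
        · rintro ⟨-, hbox⟩
          rw [hlab] at hbox
          simp at hbox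
  | impR Γ Δ A B =>
      have hAB := href.2 _ (Multiset.mem_cons_self _ _)
      simp only [KM.sat] at hAB
      rw [Classical.not_imp] at hAB
      obtain ⟨r', hr'⟩ := lab_child_of_map_snd hF
      refine ⟨false, w, ⟨r', _, hr', ?_, ?_⟩, M.le_refl w, by simp⟩
      · intro C hC
        rcases Multiset.mem_cons.mp hC with rfl | hC
        · exact hAB.1
        · exact href.1 C hC
      · intro C hC
        rcases Multiset.mem_cons.mp hC with rfl | hC
        · exact hAB.2
        · exact href.2 C (Multiset.mem_cons_of_mem hC)
  | refl Γ Δ A =>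
      have hbA := href.1 _ (Multiset.mem_cons_self _ _)
      have hA : M.sat w A := hbA w (M.le_refl w)
      obtain ⟨r', hr'⟩ := lab_child_of_map_snd hF
      refine ⟨false, w, ⟨r', _, hr', ?_, href.2⟩, M.le_refl w, by simp⟩
      intro C hC
      rcases Multiset.mem_cons.mp hC with rfl | hC
      · exact hA
      · exact href.1 C hC
  | box Γ Δ A P =>
      by_cases hA : M.sat w A
      · have hbox : ¬ M.sat w (.box A) := href.2 _ (Multiset.mem_cons_self _ _)
        simp only [KM.sat] at hbox
        push_neg at hbox
        obtain ⟨v, hwv, hvA⟩ := hbox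
        have hne : w ≠ v := fun h => hvA (h ▸ hA)
        obtain ⟨r', hr'⟩ := lab_child_of_map_snd hT
        refine ⟨true, v, ⟨r', _, hr', ?_, ?_⟩, hwv, fun _ => hne⟩
        · intro C hC
          obtain ⟨C₀, hC₀, rfl⟩ := Multiset.mem_map.mp hC
          have hw : M.sat w (.box C₀) :=
            href.1 _ (Multiset.mem_add.mpr (Or.inr (Multiset.mem_map_of_mem _ hC₀)))
          intro u hu
          exact hw u (M.le_trans hwv hu)
        · intro C hC
          rw [Multiset.mem_singleton.mp hC]
          exact hvA
      · obtain ⟨r', hr'⟩ := lab_child_of_map_snd hF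
        refine ⟨false, w, ⟨r', _, hr', href.1, ?_⟩, M.le_refl w, by simp⟩
        intro C hC
        rcases Multiset.mem_cons.mp hC with rfl | hC
        · exact hA
        · exact href.2 C (Multiset.mem_cons_of_mem hC)
  | cut Γ Δ A =>
      by_cases hA : M.sat w A
      · obtain ⟨r', hr'⟩ := lab_child_of_map_snd hT
        refine ⟨true, w, ⟨r', _, hr', ?_, href.2⟩, M.le_refl w, ?_⟩
        · intro C hC
          rcases Multiset.mem_cons.mp hC with rfl | hC
          · exact hA
          · exact href.1 C hC
        · rintro ⟨-, hbox⟩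
          rw [hlab] at hbox
          simp at hbox
      · obtain ⟨r', hr'⟩ := lab_child_of_map_snd hF
        refine ⟨false, w, ⟨r', _, hr', href.1, ?_⟩, M.le_refl w, by simp⟩
        intro C hC
        rcases Multiset.mem_cons.mp hC with rfl | hC
        · exact hA
        · exact href.2 C hC

noncomputable def pnext {π : InfProof} {M : KM}
    (x : {p : List Bool × M.W // PInv π M p.1 p.2}) :
    {p : List Bool × M.W // PInv π M p.1 p.2} :=
  ⟨(x.1.1 ++ [(pstep x.2).choose], (pstep x.2).choose_spec.choose),
    (pstep x.2).choose_spec.choose_spec.1⟩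

variable {π : InfProof} {M : KM}

noncomputable def pchain (w₀ : M.W) (h₀ : PInv π M [] w₀) :
    ℕ → {p : List Bool × M.W // PInv π M p.1 p.2}
  | 0 => ⟨([], w₀), h₀⟩
  | n + 1 => pnext (pchain w₀ h₀ n)

noncomputable def pbit (w₀ : M.W) (h₀ : PInv π M [] w₀) (n : ℕ) : Bool :=
  (pstep (pchain w₀ h₀ n).2).choose

noncomputable def pw (w₀ : M.W) (h₀ : PInv π M [] w₀) (n : ℕ) : M.W :=
  (pchain w₀ h₀ n).1.2

noncomputable def ppath (w₀ : M.W) (h₀ : PInv π M [] w₀) (n : ℕ) : List Bool :=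
  (pchain w₀ h₀ n).1.1

lemma ppath_succ (w₀ : M.W) (h₀ : PInv π M [] w₀) (n : ℕ) :
    ppath w₀ h₀ (n + 1) = ppath w₀ h₀ n ++ [pbit w₀ h₀ n] := rfl

lemma ppath_eq (w₀ : M.W) (h₀ : PInv π M [] w₀) :
    ∀ n, (List.range n).map (pbit w₀ h₀) = ppath w₀ h₀ n := by
  intro n
  induction n with
  | zero => rfl
  | succ n ih => rw [List.range_succ, List.map_append, ih, ppath_succ]; rfl

lemma pinv (w₀ : M.W) (h₀ : PInv π M [] w₀) (n : ℕ) :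
    PInv π M (ppath w₀ h₀ n) (pw w₀ h₀ n) := (pchain w₀ h₀ n).2

lemma pw_le (w₀ : M.W) (h₀ : PInv π M [] w₀) (n : ℕ) :
    M.le (pw w₀ h₀ n) (pw w₀ h₀ (n + 1)) :=
  (pstep (pchain w₀ h₀ n).2).choose_spec.choose_spec.2.1

lemma pw_mono (w₀ : M.W) (h₀ : PInv π M [] w₀) {m n : ℕ} (h : m ≤ n) :
    M.le (pw w₀ h₀ m) (pw w₀ h₀ n) := by
  induction n, h using Nat.le_induction with
  | base => exact M.le_refl _
  | succ n hmn ih => exact M.le_trans ih (pw_le w₀ h₀ n)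

lemma pstrict (w₀ : M.W) (h₀ : PInv π M [] w₀) (n : ℕ)
    (hb : pbit w₀ h₀ n = true)
    (hbox : (π.lab (ppath w₀ h₀ n)).map Prod.fst = some Rule.box) :
    pw w₀ h₀ n ≠ pw w₀ h₀ (n + 1) :=
  (pstep (pchain w₀ h₀ n).2).choose_spec.choose_spec.2.2 ⟨hb, hbox⟩

lemma soundness (π : InfProof) (S : Sequent) (h : Proves π S) : Valid S := by
  intro M w₀ href
  haveI : Finite M.W := M.fin
  obtain ⟨r₀, hr₀⟩ := h
  have h₀ : PInv π M [] w₀ := ⟨r₀, S, hr₀, href⟩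
  have hall : ∀ n, (π.lab ((List.range n).map (pbit w₀ h₀))).isSome := by
    intro n
    rw [ppath_eq]
    obtain ⟨r, s, hs, -⟩ := pinv w₀ h₀ n
    rw [hs]; rfl
  have hbr := π.branch (pbit w₀ h₀) hall
  have key : ∀ N, ∃ n, N ≤ n ∧ pw w₀ h₀ n ≠ pw w₀ h₀ (n + 1) := by
    intro N
    obtain ⟨n, hNn, hbt, hbox⟩ := hbr N
    rw [ppath_eq] at hbox
    exact ⟨n, hNn, pstrict w₀ h₀ n hbt hbox⟩
  choose g hg1 hg2 using key
  let idx : ℕ → ℕ := fun k => Nat.rec (g 0) (fun _ p => g (p + 1)) k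
  have hidx_succ : ∀ k, idx (k + 1) = g (idx k + 1) := fun k => rfl
  have hA : ∀ k, pw w₀ h₀ (idx k) ≠ pw w₀ h₀ (idx k + 1) := by
    intro k
    cases k with
    | zero => exact hg2 0
    | succ k => rw [hidx_succ]; exact hg2 _
  have hB : ∀ k, idx k + 1 ≤ idx (k + 1) := by
    intro k; rw [hidx_succ]; exact hg1 _
  have hmono : ∀ {k l : ℕ}, k < l → idx k + 1 ≤ idx l := by
    intro k l hkl
    induction l with
    | zero => omega
    | succ l ih =>
        rcases Nat.lt_succ_iff_lt_or_eq.mp hkl with h | rfl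
        · have := ih h
          have := hB l
          have hle : idx l ≤ idx (l+1) := by omega
          omega
        · exact hB k
  have hdist : ∀ {k l : ℕ}, k < l → pw w₀ h₀ (idx k) ≠ pw w₀ h₀ (idx l) := by
    intro k l hkl heq
    have h1 := pw_le w₀ h₀ (idx k)
    have h2 : M.le (pw w₀ h₀ (idx k + 1)) (pw w₀ h₀ (idx l)) := pw_mono w₀ h₀ (hmono hkl)
    have h3 : M.le (pw w₀ h₀ (idx k + 1)) (pw w₀ h₀ (idx k)) := heq ▸ h2
    exact hA k (M.le_antisymm h1 h3)
  obtain ⟨k, l, hne, heq⟩ :=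
    Finite.exists_ne_map_eq_of_infinite (fun k => pw w₀ h₀ (idx k))
  rcases lt_or_gt_of_ne hne with h | h
  · exact hdist h heq
  · exact hdist h heq.symm

end CE
namespace CE

/-! ### truth/falsity witnesses -/

def Wit (Γ Δ : Multiset Formula) : Formula → Prop × Prop
  | .bot => (Formula.bot ∈ Γ, True)
  | .atom p => (Formula.atom p ∈ Γ, Formula.atom p ∈ Δ)
  | .imp A B => (Formula.imp A B ∈ Γ ∨ (Wit Γ Δ A).2 ∨ (Wit Γ Δ B).1,
                 Formula.imp A B ∈ Δ ∨ ((Wit Γ Δ A).1 ∧ (Wit Γ Δ B).2))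
  | .box B => (Formula.box B ∈ Γ, Formula.box B ∈ Δ ∨ (Wit Γ Δ B).2)

def TW (Γ Δ : Multiset Formula) (C : Formula) : Prop := (Wit Γ Δ C).1
def FW (Γ Δ : Multiset Formula) (C : Formula) : Prop := (Wit Γ Δ C).2

lemma mem_TW {Γ Δ : Multiset Formula} {C : Formula} (h : C ∈ Γ) : TW Γ Δ C := by
  cases C <;> simp only [TW, Wit] <;> tauto

lemma mem_FW {Γ Δ : Multiset Formula} {C : Formula} (h : C ∈ Δ) : FW Γ Δ C := by
  cases C <;> simp only [FW, Wit] <;> tauto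

lemma wit_mono {Γ Δ Γ' Δ' : Multiset Formula}
    (hΓ : ∀ C ∈ Γ, TW Γ' Δ' C) (hΔ : ∀ C ∈ Δ, FW Γ' Δ' C) :
    ∀ C, (TW Γ Δ C → TW Γ' Δ' C) ∧ (FW Γ Δ C → FW Γ' Δ' C) := by
  intro C
  induction C with
  | bot => exact ⟨fun h => hΓ _ h, fun _ => trivial⟩
  | atom p => exact ⟨fun h => hΓ _ h, fun h => hΔ _ h⟩
  | imp A B ihA ihB =>
      constructor
      · rintro (h | h | h)
        · exact hΓ _ h
        · exact Or.inr (Or.inl (ihA.2 h))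
        · exact Or.inr (Or.inr (ihB.1 h))
      · rintro (h | ⟨h1, h2⟩)
        · exact hΔ _ h
        · exact Or.inr ⟨ihA.1 h1, ihB.2 h2⟩
  | box B ihB =>
      constructor
      · exact fun h => hΓ _ h
      · rintro (h | h)
        · exact hΔ _ h
        · exact Or.inr (ihB.2 h)

/-! ### box parts -/

def isBoxB : Formula → Bool
  | .box _ => true
  | _ => false

def boxPart (Γ : Multiset Formula) : Multiset Formula :=
  Γ.filter (fun C => isBoxB C = true)

def unboxed (Γ : Multiset Formula) : Multiset Formula :=
  Γ.filterMap (fun C => match C with | .box B => some B | _ => none)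

lemma boxed_unboxed (Γ : Multiset Formula) : boxed (unboxed Γ) = boxPart Γ := by
  induction Γ using Multiset.induction with
  | empty => rfl
  | cons C Γ ih =>
      cases C with
      | box A =>
          have h1 : unboxed (Formula.box A ::ₘ Γ) = A ::ₘ unboxed Γ :=
            Multiset.filterMap_cons_some _ _ _ rfl
          have h2 : boxPart (Formula.box A ::ₘ Γ) = Formula.box A ::ₘ boxPart Γ := by
            rw [boxPart, boxPart, Multiset.filter_cons_of_pos (p := fun C => isBoxB C = true) _ rfl]
          rw [h1, h2, ← ih]
          exact Multiset.map_cons _ _ _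
      | bot =>
          have h1 : unboxed (Formula.bot ::ₘ Γ) = unboxed Γ :=
            Multiset.filterMap_cons_none _ _ rfl
          have h2 : boxPart (Formula.bot ::ₘ Γ) = boxPart Γ := by
            rw [boxPart, boxPart, Multiset.filter_cons_of_neg _ (by simp [isBoxB])]
          rw [h1, h2, ih]
      | atom p =>
          have h1 : unboxed (Formula.atom p ::ₘ Γ) = unboxed Γ :=
            Multiset.filterMap_cons_none _ _ rfl
          have h2 : boxPart (Formula.atom p ::ₘ Γ) = boxPart Γ := by
            rw [boxPart, boxPart, Multiset.filter_cons_of_neg _ (by simp [isBoxB])]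
          rw [h1, h2, ih]
      | imp A B =>
          have h1 : unboxed (Formula.imp A B ::ₘ Γ) = unboxed Γ :=
            Multiset.filterMap_cons_none _ _ rfl
          have h2 : boxPart (Formula.imp A B ::ₘ Γ) = boxPart Γ := by
            rw [boxPart, boxPart, Multiset.filter_cons_of_neg _ (by simp [isBoxB])]
          rw [h1, h2, ih]

lemma boxPart_add_rest (Γ : Multiset Formula) :
    Γ.filter (fun C => ¬ (isBoxB C = true)) + boxPart Γ = Γ := by
  rw [boxPart, add_comm, Multiset.filter_add_not]

lemma mem_boxPart {Γ : Multiset Formula} {B : Formula} (h : Formula.box B ∈ Γ) :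
    Formula.box B ∈ boxPart Γ :=
  Multiset.mem_filter.mpr ⟨h, rfl⟩

end CE
namespace CE

/-! ### glued models -/

section Glue

variable {I : Type} (Mi : I → KM) (wi : ∀ i, (Mi i).W)

def GV (i : I) : Type := {x : (Mi i).W // (Mi i).le (wi i) x}

def GW : Type := Option (Σ i : I, GV Mi wi i)

inductive gle : GW Mi wi → GW Mi wi → Prop
  | bot (x : GW Mi wi) : gle none x
  | up (i : I) (u v : GV Mi wi i) : (Mi i).le u.1 v.1 → gle (some ⟨i, u⟩) (some ⟨i, v⟩)

lemma gle_some_inv {i : I} {u : GV Mi wi i} {c : GW Mi wi} (h : gle Mi wi (some ⟨i, u⟩) c) :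
    ∃ v : GV Mi wi i, c = some ⟨i, v⟩ ∧ (Mi i).le u.1 v.1 := by
  cases h with
  | up i u v huv => exact ⟨v, rfl, huv⟩

noncomputable def GM (fin : Finite (GW Mi wi)) (rootval : ℕ → Prop) : KM where
  W := GW Mi wi
  fin := fin
  le := gle Mi wi
  le_refl := by
    rintro (_ | ⟨i, u⟩)
    · exact gle.bot _
    · exact gle.up i u u ((Mi i).le_refl _)
  le_trans := by
    rintro a b c hab hbc
    cases hab with
    | bot => exact gle.bot _
    | up i u v huv =>
        obtain ⟨w, rfl, hvw⟩ := gle_some_inv Mi wi hbc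
        exact gle.up i u w ((Mi i).le_trans huv hvw)
  le_antisymm := by
    rintro a b h1 h2
    cases h1 with
    | bot x =>
        cases h2 with
        | bot _ => rfl
    | up i u v huv =>
        obtain ⟨v', hv', hle2⟩ := gle_some_inv Mi wi h2
        have hv'' : u = v' := eq_of_heq (Sigma.mk.inj_iff.mp (Option.some.inj hv')).2
        subst hv''
        have huv' : u = v := Subtype.ext ((Mi i).le_antisymm huv hle2)
        rw [huv']
  val := fun x p => match x with
    | none => rootval p
    | some ⟨i, u⟩ => (Mi i).val u.1 p

lemma sat_glue (fin : Finite (GW Mi wi)) (rootval : ℕ → Prop) :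
    ∀ (C : Formula) (i : I) (u : GV Mi wi i),
      ((GM Mi wi fin rootval).sat (some ⟨i, u⟩) C ↔ (Mi i).sat u.1 C) := by
  intro C
  induction C with
  | bot => intro i u; simp [KM.sat]
  | atom p => intro i u; simp [KM.sat, GM]
  | imp A B ihA ihB =>
      intro i u
      simp only [KM.sat]
      rw [ihA, ihB]
  | box A ihA =>
      intro i u
      simp only [KM.sat]
      constructor
      · intro h x hx
        have hx' : (Mi i).le (wi i) x := (Mi i).le_trans u.2 hx
        have := h (some ⟨i, ⟨x, hx'⟩⟩) (gle.up i u ⟨x, hx'⟩ hx)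
        exact (ihA i ⟨x, hx'⟩).mp this
      · intro h y hy
        obtain ⟨v, rfl, hle⟩ := gle_some_inv Mi wi hy
        exact (ihA i v).mpr (h v.1 hle)

end Glue

/-! ### the phase-end refutability lemma -/

lemma phase_end (Γ Δ : Multiset Formula)
    (c1 : Formula.bot ∉ Γ)
    (c2 : ∀ p, Formula.atom p ∈ Γ → Formula.atom p ∉ Δ)
    (c3 : ∀ A B, Formula.imp A B ∈ Γ → FW Γ Δ A ∨ TW Γ Δ B)
    (c4 : ∀ B, Formula.box B ∈ Γ → TW Γ Δ B)
    (c5 : ∀ A B, Formula.imp A B ∈ Δ → TW Γ Δ A ∧ FW Γ Δ B)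
    (c6 : ∀ B, Formula.box B ∈ Δ → ∃ (M : KM) (w : M.W), Refutes M w (boxPart Γ, {B})) :
    ∃ (M : KM) (w : M.W), Refutes M w (Γ, Δ) := by
  classical
  choose Mf wf hf using c6
  set I := {B : Formula // Formula.box B ∈ Δ} with hI
  let Mi : I → KM := fun i => Mf i.1 i.2
  let wi : ∀ i, (Mi i).W := fun i => wf i.1 i.2
  haveI finI : Finite I := by
    have : Function.Injective (fun i : I => (⟨Formula.box i.1, Multiset.mem_toFinset.mpr i.2⟩ :
        {x // x ∈ Δ.toFinset})) := by
      intro i j hij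
      simp only [Subtype.mk.injEq, Formula.box.injEq] at hij
      exact Subtype.ext hij
    exact Finite.of_injective _ this
  have finW : Finite (GW Mi wi) := by
    have hV : ∀ i, Finite (GV Mi wi i) := fun i => by
      haveI := (Mi i).fin
      unfold GV
      infer_instance
    haveI := hV
    haveI : Finite ((i : I) × GV Mi wi i) := by infer_instance
    exact Finite.of_equiv _ (Equiv.optionEquivSumPUnit.{0, 0} ((i : I) × GV Mi wi i)).symm
  set rv : ℕ → Prop := fun p => Formula.atom p ∈ Γ with hrv
  set M₀ : KM := GM Mi wi finW rv with hM₀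
  have truth : ∀ C : Formula,
      (TW Γ Δ C → M₀.sat none C) ∧ (FW Γ Δ C → ¬ M₀.sat none C) := by
    intro C
    induction C with
    | bot =>
        constructor
        · intro h; exact absurd h c1
        · intro _ h; exact h
    | atom p =>
        constructor
        · intro h; exact h
        · intro h hs; exact c2 p hs h
    | imp A B ihA ihB =>
        constructor
        · rintro (h | h | h)
          · rcases c3 A B h with h' | h'
            · intro hA; exact absurd hA (ihA.2 h')
            · intro _; exact ihB.1 h'
          · intro hA; exact absurd hA (ihA.2 h)
          · intro _; exact ihB.1 h
        · rintro (h | ⟨h1, h2⟩)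
          · obtain ⟨hA, hB⟩ := c5 A B h
            intro hs; exact ihB.2 hB (hs (ihA.1 hA))
          · intro hs; exact ihB.2 h2 (hs (ihA.1 h1))
    | box B ihB =>
        constructor
        · intro h
          rintro (_ | ⟨i, u⟩) hy
          · exact ihB.1 (c4 B h)
          · rw [sat_glue]
            have hsatw : (Mi i).sat (wi i) (Formula.box B) :=
              (hf i.1 i.2).1 _ (mem_boxPart h)
            exact hsatw u.1 u.2
        · rintro (h | h)
          · intro hs
            have hp : M₀.sat (some ⟨⟨B, h⟩, ⟨wi ⟨B, h⟩, (Mi ⟨B, h⟩).le_refl _⟩⟩) B :=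
              hs _ (gle.bot _)
            have hp := (sat_glue Mi wi finW rv B ⟨B, h⟩ ⟨wi ⟨B, h⟩, (Mi ⟨B, h⟩).le_refl _⟩).mp hp
            exact (hf B h).2 B (Multiset.mem_singleton_self B) hp
          · intro hs
            exact ihB.2 h (hs none (gle.bot none))
  refine ⟨M₀, none, fun C hC => (truth C).1 (mem_TW hC), fun C hC => (truth C).2 (mem_FW hC)⟩

end CE
namespace CE

/-! ### closure, obligations and the measure -/

noncomputable def CL (S₀ : Sequent) : Finset Formula := (S₀.1 + S₀.2).toFinset.biUnion subf

lemma CL_closed {S₀ : Sequent} {C : Formula} (h : C ∈ CL S₀) : subf C ⊆ CL S₀ := by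
  intro x hx
  obtain ⟨D, hD, hCD⟩ := Finset.mem_biUnion.mp h
  exact Finset.mem_biUnion.mpr ⟨D, hD, subf_trans D C hCD hx⟩

def SubCL (S₀ : Sequent) (s : Sequent) : Prop :=
  (∀ C ∈ s.1, C ∈ CL S₀) ∧ (∀ C ∈ s.2, C ∈ CL S₀)

def ob1 (Γ Δ : Multiset Formula) : Formula → Prop
  | .imp A B => ¬(FW Γ Δ A ∨ TW Γ Δ B)
  | _ => False

def ob2 (Γ Δ : Multiset Formula) : Formula → Prop
  | .box B => ¬ TW Γ Δ B
  | _ => False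

def ob3 (Γ Δ : Multiset Formula) : Formula → Prop
  | .imp A B => ¬(TW Γ Δ A ∧ FW Γ Δ B)
  | _ => False

open scoped Classical in
noncomputable def U (S₀ : Sequent) (Γ Δ : Multiset Formula) : ℕ :=
  ((CL S₀).filter (ob1 Γ Δ)).card + ((CL S₀).filter (ob2 Γ Δ)).card +
    ((CL S₀).filter (ob3 Γ Δ)).card

def Dw (Δ : Multiset Formula) : ℕ := (Δ.map (fun C => 3 ^ fsize C)).sum

noncomputable def maxCL (S₀ : Sequent) : ℕ := (CL S₀).sup fsize

noncomputable def Wt (S₀ : Sequent) : ℕ := 3 ^ (maxCL S₀) + 1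

noncomputable def Msr (S₀ : Sequent) (s : Sequent) : ℕ := Wt S₀ * U S₀ s.1 s.2 + Dw s.2

lemma Dw_cons (C : Formula) (Δ : Multiset Formula) : Dw (C ::ₘ Δ) = 3 ^ fsize C + Dw Δ := by
  simp [Dw, Multiset.map_cons, Multiset.sum_cons]

lemma Dw_erase {C : Formula} {Δ : Multiset Formula} (h : C ∈ Δ) :
    Dw Δ = 3 ^ fsize C + Dw (Δ.erase C) := by
  conv_lhs => rw [← Multiset.cons_erase h]
  exact Dw_cons _ _

section UMono

variable {S₀ : Sequent} {Γ Δ Γ' Δ' : Multiset Formula}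
variable (hΓ : ∀ C ∈ Γ, TW Γ' Δ' C) (hΔ : ∀ C ∈ Δ, FW Γ' Δ' C)

include hΓ hΔ

lemma ob1_off : ∀ C, ob1 Γ' Δ' C → ob1 Γ Δ C := by
  intro C h
  cases C with
  | imp A B =>
      intro hcon
      rcases hcon with h' | h'
      · exact h (Or.inl ((wit_mono hΓ hΔ A).2 h'))
      · exact h (Or.inr ((wit_mono hΓ hΔ B).1 h'))
  | bot => exact h
  | atom p => exact h
  | box B => exact h

lemma ob2_off : ∀ C, ob2 Γ' Δ' C → ob2 Γ Δ C := by
  intro C h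
  cases C with
  | box B => exact fun hcon => h ((wit_mono hΓ hΔ B).1 hcon)
  | bot => exact h
  | atom p => exact h
  | imp A B => exact h

lemma ob3_off : ∀ C, ob3 Γ' Δ' C → ob3 Γ Δ C := by
  intro C h
  cases C with
  | imp A B =>
      exact fun hcon => h ⟨(wit_mono hΓ hΔ A).1 hcon.1, (wit_mono hΓ hΔ B).2 hcon.2⟩
  | bot => exact h
  | atom p => exact h
  | box B => exact h

open scoped Classical in
lemma U_le : U S₀ Γ' Δ' ≤ U S₀ Γ Δ := by
  unfold U
  have h1 := Finset.card_le_card (Finset.monotone_filter_right (CL S₀)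
    (fun C _ => ob1_off hΓ hΔ C))
  have h2 := Finset.card_le_card (Finset.monotone_filter_right (CL S₀)
    (fun C _ => ob2_off hΓ hΔ C))
  have h3 := Finset.card_le_card (Finset.monotone_filter_right (CL S₀)
    (fun C _ => ob3_off hΓ hΔ C))
  omega

open scoped Classical in
lemma U_lt1 {A B : Formula} (hmem : Formula.imp A B ∈ CL S₀)
    (hb : ob1 Γ Δ (.imp A B)) (ha : ¬ ob1 Γ' Δ' (.imp A B)) :
    U S₀ Γ' Δ' < U S₀ Γ Δ := by
  unfold U
  have h1 : ((CL S₀).filter (ob1 Γ' Δ')).card < ((CL S₀).filter (ob1 Γ Δ)).card := by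
    apply Finset.card_lt_card
    constructor
    · exact Finset.monotone_filter_right (CL S₀) (fun C _ => ob1_off hΓ hΔ C)
    · intro hsub
      exact ha (Finset.mem_filter.mp (hsub (Finset.mem_filter.mpr ⟨hmem, hb⟩))).2
  have h2 := Finset.card_le_card (Finset.monotone_filter_right (CL S₀)
    (fun C _ => ob2_off hΓ hΔ C))
  have h3 := Finset.card_le_card (Finset.monotone_filter_right (CL S₀)
    (fun C _ => ob3_off hΓ hΔ C))
  omega

open scoped Classical in
lemma U_lt2 {B : Formula} (hmem : Formula.box B ∈ CL S₀)
    (hb : ob2 Γ Δ (.box B)) (ha : ¬ ob2 Γ' Δ' (.box B)) :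
    U S₀ Γ' Δ' < U S₀ Γ Δ := by
  unfold U
  have h1 : ((CL S₀).filter (ob2 Γ' Δ')).card < ((CL S₀).filter (ob2 Γ Δ)).card := by
    apply Finset.card_lt_card
    constructor
    · exact Finset.monotone_filter_right (CL S₀) (fun C _ => ob2_off hΓ hΔ C)
    · intro hsub
      exact ha (Finset.mem_filter.mp (hsub (Finset.mem_filter.mpr ⟨hmem, hb⟩))).2
  have h2 := Finset.card_le_card (Finset.monotone_filter_right (CL S₀)
    (fun C _ => ob1_off hΓ hΔ C))
  have h3 := Finset.card_le_card (Finset.monotone_filter_right (CL S₀)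
    (fun C _ => ob3_off hΓ hΔ C))
  omega

open scoped Classical in
lemma U_lt3 {A B : Formula} (hmem : Formula.imp A B ∈ CL S₀)
    (hb : ob3 Γ Δ (.imp A B)) (ha : ¬ ob3 Γ' Δ' (.imp A B)) :
    U S₀ Γ' Δ' < U S₀ Γ Δ := by
  unfold U
  have h1 : ((CL S₀).filter (ob3 Γ' Δ')).card < ((CL S₀).filter (ob3 Γ Δ)).card := by
    apply Finset.card_lt_card
    constructor
    · exact Finset.monotone_filter_right (CL S₀) (fun C _ => ob3_off hΓ hΔ C)
    · intro hsub
      exact ha (Finset.mem_filter.mp (hsub (Finset.mem_filter.mpr ⟨hmem, hb⟩))).2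
  have h2 := Finset.card_le_card (Finset.monotone_filter_right (CL S₀)
    (fun C _ => ob1_off hΓ hΔ C))
  have h3 := Finset.card_le_card (Finset.monotone_filter_right (CL S₀)
    (fun C _ => ob2_off hΓ hΔ C))
  omega

end UMono

lemma pow_lt_Wt {S₀ : Sequent} {C : Formula} (h : C ∈ CL S₀) : 3 ^ fsize C < Wt S₀ := by
  have : fsize C ≤ maxCL S₀ := Finset.le_sup h
  have := Nat.pow_le_pow_right (by norm_num : 1 ≤ 3) this
  unfold Wt
  omega

lemma Wt_pos (S₀ : Sequent) : 0 < Wt S₀ := by unfold Wt; positivity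

lemma mem_erase_cases {C D : Formula} {Γ : Multiset Formula} (h : C ∈ Γ) :
    C ∈ Γ.erase D ∨ C = D := by
  by_cases hCD : C = D
  · exact Or.inr hCD
  · exact Or.inl ((Multiset.mem_erase_of_ne hCD).mpr h)

end CE
namespace CE

/-! ### validity transfer for the children of the proof-search steps -/

lemma valid_impL_left {Γ Δ : Multiset Formula} {A B : Formula} (hm : Formula.imp A B ∈ Γ)
    (hv : Valid (Γ, Δ)) : Valid (B ::ₘ Γ.erase (.imp A B), Δ) := by
  intro M w href
  apply hv M w
  refine ⟨fun C hC => ?_, href.2⟩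
  rcases mem_erase_cases (D := .imp A B) hC with h' | rfl
  · exact href.1 C (Multiset.mem_cons_of_mem h')
  · exact fun _ => href.1 B (Multiset.mem_cons_self _ _)

lemma valid_impL_right {Γ Δ : Multiset Formula} {A B : Formula} (hm : Formula.imp A B ∈ Γ)
    (hv : Valid (Γ, Δ)) : Valid (Γ.erase (.imp A B), A ::ₘ Δ) := by
  intro M w href
  apply hv M w
  refine ⟨fun C hC => ?_, fun C hC => href.2 C (Multiset.mem_cons_of_mem hC)⟩
  rcases mem_erase_cases (D := .imp A B) hC with h' | rfl
  · exact href.1 C h'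
  · exact fun hA => absurd hA (href.2 A (Multiset.mem_cons_self _ _))

lemma valid_refl {Γ Δ : Multiset Formula} {B : Formula}
    (hv : Valid (Γ, Δ)) : Valid (B ::ₘ Γ, Δ) := by
  intro M w href
  exact hv M w ⟨fun C hC => href.1 C (Multiset.mem_cons_of_mem hC), href.2⟩

lemma valid_impR {Γ Δ : Multiset Formula} {A B : Formula} (hm : Formula.imp A B ∈ Δ)
    (hv : Valid (Γ, Δ)) : Valid (A ::ₘ Γ, B ::ₘ Δ.erase (.imp A B)) := by
  intro M w href
  apply hv M w
  refine ⟨fun C hC => href.1 C (Multiset.mem_cons_of_mem hC), fun C hC => ?_⟩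
  rcases mem_erase_cases (D := .imp A B) hC with h' | rfl
  · exact href.2 C (Multiset.mem_cons_of_mem h')
  · intro hsat
    exact href.2 B (Multiset.mem_cons_self _ _) (hsat (href.1 A (Multiset.mem_cons_self _ _)))

lemma valid_boxL {Γ Δ : Multiset Formula} {B : Formula} (hm : Formula.box B ∈ Δ)
    (hv : Valid (Γ, Δ)) : Valid (Γ, B ::ₘ Δ.erase (.box B)) := by
  intro M w href
  apply hv M w
  refine ⟨href.1, fun C hC => ?_⟩
  rcases mem_erase_cases (D := .box B) hC with h' | rfl
  · exact href.2 C (Multiset.mem_cons_of_mem h')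
  · intro hsat
    exact href.2 B (Multiset.mem_cons_self _ _) (hsat w (M.le_refl w))

/-! ### the proof-search transition function -/

open scoped Classical in
noncomputable def trans (s : Sequent) : Option (Rule × (Bool → Option Sequent)) :=
  if Formula.bot ∈ s.1 then some (.axBot, fun _ => none)
  else if ∃ p : ℕ, Formula.atom p ∈ s.1 ∧ Formula.atom p ∈ s.2 then some (.ax, fun _ => none)
  else if h3 : ∃ A B : Formula, Formula.imp A B ∈ s.1 ∧ ob1 s.1 s.2 (.imp A B) then
    some (.impL, fun b =>
      if b then some (s.1.erase (.imp h3.choose h3.choose_spec.choose), h3.choose ::ₘ s.2)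
      else some (h3.choose_spec.choose ::ₘ s.1.erase (.imp h3.choose h3.choose_spec.choose), s.2))
  else if h4 : ∃ B : Formula, Formula.box B ∈ s.1 ∧ ob2 s.1 s.2 (.box B) then
    some (.refl, fun b => if b then none else some (h4.choose ::ₘ s.1, s.2))
  else if h5 : ∃ A B : Formula, Formula.imp A B ∈ s.2 ∧ ob3 s.1 s.2 (.imp A B) then
    some (.impR, fun b =>
      if b then none
      else some (h5.choose ::ₘ s.1,
        h5.choose_spec.choose ::ₘ s.2.erase (.imp h5.choose h5.choose_spec.choose)))
  else if h6 : ∃ B : Formula, Formula.box B ∈ s.2 ∧ Valid (boxPart s.1, {B}) then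
    some (.box, fun b =>
      if b then some (boxPart s.1, {h6.choose})
      else some (s.1, h6.choose ::ₘ s.2.erase (.box h6.choose)))
  else none

lemma trans_ne_cut {s : Sequent} {r : Rule} {ch : Bool → Option Sequent}
    (h : trans s = some (r, ch)) : r ≠ Rule.cut := by
  unfold trans at h
  split_ifs at h <;>
    (simp only [Option.some.injEq, Prod.mk.injEq] at h; obtain ⟨rfl, rfl⟩ := h; simp)

lemma trans_fire {s : Sequent} (hv : Valid s) : (trans s).isSome := by
  obtain ⟨Γ, Δ⟩ := s
  unfold trans
  split_ifs with h1 h2 h3 h4 h5 h6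
  · rfl
  · rfl
  · rfl
  · rfl
  · rfl
  · rfl
  · exfalso
    have c2 : ∀ p, Formula.atom p ∈ Γ → Formula.atom p ∉ Δ := by
      intro p hp hq
      exact h2 ⟨p, hp, hq⟩
    have c3 : ∀ A B, Formula.imp A B ∈ Γ → FW Γ Δ A ∨ TW Γ Δ B := by
      intro A B hm
      by_contra hcon
      exact h3 ⟨A, B, hm, hcon⟩
    have c4 : ∀ B, Formula.box B ∈ Γ → TW Γ Δ B := by
      intro B hm
      by_contra hcon
      exact h4 ⟨B, hm, hcon⟩
    have c5 : ∀ A B, Formula.imp A B ∈ Δ → TW Γ Δ A ∧ FW Γ Δ B := by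
      intro A B hm
      by_contra hcon
      exact h5 ⟨A, B, hm, hcon⟩
    have c6 : ∀ B, Formula.box B ∈ Δ →
        ∃ (M : KM) (w : M.W), Refutes M w (boxPart Γ, {B}) := by
      intro B hm
      have : ¬ Valid (boxPart Γ, {B}) := fun hval => h6 ⟨B, hm, hval⟩
      exact (not_valid_iff _).mp this
    obtain ⟨M, w, hres⟩ := phase_end Γ Δ h1 c2 c3 c4 c5 c6
    exact hv M w hres

lemma trans_inst {s : Sequent} {r : Rule} {ch : Bool → Option Sequent}
    (h : trans s = some (r, ch)) : Inst r s (ch false) (ch true) := by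
  obtain ⟨Γ, Δ⟩ := s
  unfold trans at h
  split_ifs at h with h1 h2 h3 h4 h5 h6 <;>
    (simp only [Option.some.injEq, Prod.mk.injEq] at h; obtain ⟨rfl, rfl⟩ := h)
  · have := Inst.axBot (Γ.erase .bot) Δ
    rwa [Multiset.cons_erase h1] at this
  · obtain ⟨p, hp1, hp2⟩ := h2
    have := Inst.ax (Γ.erase (.atom p)) (Δ.erase (.atom p)) p
    rwa [Multiset.cons_erase hp1, Multiset.cons_erase hp2] at this
  · obtain ⟨hm, -⟩ := h3.choose_spec.choose_spec
    have := Inst.impL (Γ.erase (.imp h3.choose h3.choose_spec.choose)) Δ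
      h3.choose h3.choose_spec.choose
    rw [Multiset.cons_erase hm] at this
    simpa using this
  · obtain ⟨hm, -⟩ := h4.choose_spec
    have := Inst.refl (Γ.erase (.box h4.choose)) Δ h4.choose
    rw [Multiset.cons_erase hm] at this
    simpa using this
  · obtain ⟨hm, -⟩ := h5.choose_spec.choose_spec
    have := Inst.impR Γ (Δ.erase (.imp h5.choose h5.choose_spec.choose))
      h5.choose h5.choose_spec.choose
    rw [Multiset.cons_erase hm] at this
    simpa using this
  · obtain ⟨hm, -⟩ := h6.choose_spec
    have := Inst.box (Γ.filter (fun C => ¬ (isBoxB C = true))) (Δ.erase (.box h6.choose))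
      h6.choose (unboxed Γ)
    rw [boxed_unboxed, boxPart_add_rest, Multiset.cons_erase hm] at this
    simpa using this

lemma trans_child_valid {s : Sequent} {r : Rule} {ch : Bool → Option Sequent}
    (h : trans s = some (r, ch)) (hv : Valid s) :
    ∀ b s', ch b = some s' → Valid s' := by
  obtain ⟨Γ, Δ⟩ := s
  unfold trans at h
  split_ifs at h with h1 h2 h3 h4 h5 h6 <;>
    (simp only [Option.some.injEq, Prod.mk.injEq] at h; obtain ⟨rfl, rfl⟩ := h) <;>
    intro b s' hb
  · simp at hb
  · simp at hb
  · obtain ⟨hm, -⟩ := h3.choose_spec.choose_spec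
    cases b
    · simp only [if_neg (by simp : ¬ (false = true))] at hb
      rw [← Option.some.inj hb]
      exact valid_impL_left hm hv
    · simp only [if_pos rfl] at hb
      rw [← Option.some.inj hb]
      exact valid_impL_right hm hv
  · cases b
    · simp only [if_neg (by simp : ¬ (false = true))] at hb
      rw [← Option.some.inj hb]
      exact valid_refl hv
    · simp at hb
  · obtain ⟨hm, -⟩ := h5.choose_spec.choose_spec
    cases b
    · simp only [if_neg (by simp : ¬ (false = true))] at hb
      rw [← Option.some.inj hb]
      exact valid_impR hm hv
    · simp at hb
  · obtain ⟨hm, hval⟩ := h6.choose_spec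
    cases b
    · simp only [if_neg (by simp : ¬ (false = true))] at hb
      rw [← Option.some.inj hb]
      exact valid_boxL hm hv
    · simp only [if_pos rfl] at hb
      rw [← Option.some.inj hb]
      exact hval

end CE
namespace CE

lemma TW_imp_of_TW {Γ Δ : Multiset Formula} {A B : Formula} (h : TW Γ Δ B) :
    TW Γ Δ (.imp A B) := by
  simp only [TW, Wit]
  exact Or.inr (Or.inr h)

lemma TW_imp_of_FW {Γ Δ : Multiset Formula} {A B : Formula} (h : FW Γ Δ A) :
    TW Γ Δ (.imp A B) := by
  simp only [TW, Wit]
  exact Or.inr (Or.inl h)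

lemma FW_imp_of {Γ Δ : Multiset Formula} {A B : Formula} (h1 : TW Γ Δ A) (h2 : FW Γ Δ B) :
    FW Γ Δ (.imp A B) := by
  simp only [FW, Wit]
  exact Or.inr ⟨h1, h2⟩

lemma FW_box_of {Γ Δ : Multiset Formula} {B : Formula} (h : FW Γ Δ B) :
    FW Γ Δ (.box B) := by
  simp only [FW, Wit]
  exact Or.inr h

lemma ob1_not_imp {Γ Δ : Multiset Formula} {A B : Formula}
    (h : FW Γ Δ A ∨ TW Γ Δ B) : ¬ ob1 Γ Δ (.imp A B) := by
  simp only [ob1]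
  exact fun hcon => hcon h

lemma ob2_not_box {Γ Δ : Multiset Formula} {B : Formula}
    (h : TW Γ Δ B) : ¬ ob2 Γ Δ (.box B) := by
  simp only [ob2]
  exact fun hcon => hcon h

lemma ob3_not_imp {Γ Δ : Multiset Formula} {A B : Formula}
    (h : TW Γ Δ A ∧ FW Γ Δ B) : ¬ ob3 Γ Δ (.imp A B) := by
  simp only [ob3]
  exact fun hcon => hcon h

lemma subf_imp_left (A B : Formula) : A ∈ subf (.imp A B) := by
  simp [subf, self_mem_subf]

lemma subf_imp_right (A B : Formula) : B ∈ subf (.imp A B) := by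
  simp [subf, self_mem_subf]

lemma subf_box_mem (B : Formula) : B ∈ subf (.box B) := by
  simp [subf, self_mem_subf]

lemma fsize_lt_imp_left (A B : Formula) : fsize A < fsize (.imp A B) := by
  simp [fsize]

lemma fsize_lt_imp_right (A B : Formula) : fsize B < fsize (.imp A B) := by
  simp [fsize]

lemma fsize_lt_box (B : Formula) : fsize B < fsize (.box B) := by
  simp [fsize]

lemma pow3_lt {m n : ℕ} (h : m < n) : (3:ℕ) ^ m < 3 ^ n :=
  Nat.pow_lt_pow_right (by norm_num) h

/-! individual measure lemmas for the children of each step -/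

lemma measure_impL_left {S₀ : Sequent} {Γ Δ : Multiset Formula} {A B : Formula}
    (hsub : SubCL S₀ (Γ, Δ)) (hm : Formula.imp A B ∈ Γ) (hob : ob1 Γ Δ (.imp A B)) :
    Msr S₀ (B ::ₘ Γ.erase (.imp A B), Δ) < Msr S₀ (Γ, Δ) ∧
      SubCL S₀ (B ::ₘ Γ.erase (.imp A B), Δ) := by
  have hmCL : Formula.imp A B ∈ CL S₀ := hsub.1 _ hm
  have hBCL : B ∈ CL S₀ := CL_closed hmCL (subf_imp_right A B)
  have hΓ : ∀ C ∈ Γ, TW (B ::ₘ Γ.erase (.imp A B)) Δ C := by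
    intro C hC
    rcases mem_erase_cases (D := .imp A B) hC with h' | rfl
    · exact mem_TW (Multiset.mem_cons_of_mem h')
    · exact TW_imp_of_TW (mem_TW (Multiset.mem_cons_self _ _))
  have hΔ : ∀ C ∈ Δ, FW (B ::ₘ Γ.erase (.imp A B)) Δ C := fun C hC => mem_FW hC
  have hU : U S₀ (B ::ₘ Γ.erase (.imp A B)) Δ < U S₀ Γ Δ :=
    U_lt1 hΓ hΔ hmCL hob (ob1_not_imp (Or.inr (mem_TW (Multiset.mem_cons_self _ _))))
  constructor
  · unfold Msr
    exact Nat.add_lt_add_right (mul_lt_mul_of_pos_left hU (Wt_pos S₀)) _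
  · constructor
    · intro C hC
      rcases Multiset.mem_cons.mp hC with rfl | hC
      · exact hBCL
      · exact hsub.1 _ (Multiset.mem_of_mem_erase hC)
    · exact hsub.2

lemma measure_impL_right {S₀ : Sequent} {Γ Δ : Multiset Formula} {A B : Formula}
    (hsub : SubCL S₀ (Γ, Δ)) (hm : Formula.imp A B ∈ Γ) (hob : ob1 Γ Δ (.imp A B)) :
    Msr S₀ (Γ.erase (.imp A B), A ::ₘ Δ) < Msr S₀ (Γ, Δ) ∧
      SubCL S₀ (Γ.erase (.imp A B), A ::ₘ Δ) := by
  have hmCL : Formula.imp A B ∈ CL S₀ := hsub.1 _ hm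
  have hACL : A ∈ CL S₀ := CL_closed hmCL (subf_imp_left A B)
  have hΓ : ∀ C ∈ Γ, TW (Γ.erase (.imp A B)) (A ::ₘ Δ) C := by
    intro C hC
    rcases mem_erase_cases (D := .imp A B) hC with h' | rfl
    · exact mem_TW h'
    · exact TW_imp_of_FW (mem_FW (Multiset.mem_cons_self _ _))
  have hΔ : ∀ C ∈ Δ, FW (Γ.erase (.imp A B)) (A ::ₘ Δ) C :=
    fun C hC => mem_FW (Multiset.mem_cons_of_mem hC)
  have hU : U S₀ (Γ.erase (.imp A B)) (A ::ₘ Δ) < U S₀ Γ Δ :=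
    U_lt1 hΓ hΔ hmCL hob (ob1_not_imp (Or.inl (mem_FW (Multiset.mem_cons_self _ _))))
  constructor
  · unfold Msr
    have h2' : Wt S₀ * (U S₀ (Γ.erase (.imp A B)) (A ::ₘ Δ) + 1) ≤ Wt S₀ * U S₀ Γ Δ :=
      Nat.mul_le_mul_left _ hU
    rw [Nat.mul_add, Nat.mul_one] at h2'
    have hp : 3 ^ fsize A < Wt S₀ := pow_lt_Wt hACL
    have hD : Dw (A ::ₘ Δ) = 3 ^ fsize A + Dw Δ := Dw_cons _ _
    simp only [hD]
    omega
  · constructor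
    · intro C hC
      exact hsub.1 _ (Multiset.mem_of_mem_erase hC)
    · intro C hC
      rcases Multiset.mem_cons.mp hC with rfl | hC
      · exact hACL
      · exact hsub.2 _ hC

lemma measure_refl {S₀ : Sequent} {Γ Δ : Multiset Formula} {B : Formula}
    (hsub : SubCL S₀ (Γ, Δ)) (hm : Formula.box B ∈ Γ) (hob : ob2 Γ Δ (.box B)) :
    Msr S₀ (B ::ₘ Γ, Δ) < Msr S₀ (Γ, Δ) ∧ SubCL S₀ (B ::ₘ Γ, Δ) := by
  have hmCL : Formula.box B ∈ CL S₀ := hsub.1 _ hm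
  have hBCL : B ∈ CL S₀ := CL_closed hmCL (subf_box_mem B)
  have hΓ : ∀ C ∈ Γ, TW (B ::ₘ Γ) Δ C := fun C hC => mem_TW (Multiset.mem_cons_of_mem hC)
  have hΔ : ∀ C ∈ Δ, FW (B ::ₘ Γ) Δ C := fun C hC => mem_FW hC
  have hU : U S₀ (B ::ₘ Γ) Δ < U S₀ Γ Δ :=
    U_lt2 hΓ hΔ hmCL hob (ob2_not_box (mem_TW (Multiset.mem_cons_self _ _)))
  refine ⟨?_, ?_, hsub.2⟩
  · unfold Msr
    exact Nat.add_lt_add_right (mul_lt_mul_of_pos_left hU (Wt_pos S₀)) _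
  · intro C hC
    rcases Multiset.mem_cons.mp hC with rfl | hC
    · exact hBCL
    · exact hsub.1 _ hC

lemma measure_impR {S₀ : Sequent} {Γ Δ : Multiset Formula} {A B : Formula}
    (hsub : SubCL S₀ (Γ, Δ)) (hm : Formula.imp A B ∈ Δ) (hob : ob3 Γ Δ (.imp A B)) :
    Msr S₀ (A ::ₘ Γ, B ::ₘ Δ.erase (.imp A B)) < Msr S₀ (Γ, Δ) ∧
      SubCL S₀ (A ::ₘ Γ, B ::ₘ Δ.erase (.imp A B)) := by
  have hmCL : Formula.imp A B ∈ CL S₀ := hsub.2 _ hm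
  have hACL : A ∈ CL S₀ := CL_closed hmCL (subf_imp_left A B)
  have hBCL : B ∈ CL S₀ := CL_closed hmCL (subf_imp_right A B)
  have hΓ : ∀ C ∈ Γ, TW (A ::ₘ Γ) (B ::ₘ Δ.erase (.imp A B)) C :=
    fun C hC => mem_TW (Multiset.mem_cons_of_mem hC)
  have hΔ : ∀ C ∈ Δ, FW (A ::ₘ Γ) (B ::ₘ Δ.erase (.imp A B)) C := by
    intro C hC
    rcases mem_erase_cases (D := .imp A B) hC with h' | rfl
    · exact mem_FW (Multiset.mem_cons_of_mem h')
    · exact FW_imp_of (mem_TW (Multiset.mem_cons_self _ _)) (mem_FW (Multiset.mem_cons_self _ _))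
  have hU : U S₀ (A ::ₘ Γ) (B ::ₘ Δ.erase (.imp A B)) < U S₀ Γ Δ :=
    U_lt3 hΓ hΔ hmCL hob (ob3_not_imp ⟨mem_TW (Multiset.mem_cons_self _ _),
      mem_FW (Multiset.mem_cons_self _ _)⟩)
  constructor
  · unfold Msr
    have hDold : Dw Δ = 3 ^ fsize (Formula.imp A B) + Dw (Δ.erase (.imp A B)) := Dw_erase hm
    have hDnew : Dw (B ::ₘ Δ.erase (.imp A B)) = 3 ^ fsize B + Dw (Δ.erase (.imp A B)) :=
      Dw_cons _ _
    have hpow : (3:ℕ) ^ fsize B < 3 ^ fsize (Formula.imp A B) :=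
      pow3_lt (fsize_lt_imp_right A B)
    have hmul : Wt S₀ * U S₀ (A ::ₘ Γ) (B ::ₘ Δ.erase (.imp A B)) ≤ Wt S₀ * U S₀ Γ Δ :=
      Nat.mul_le_mul_left _ (le_of_lt hU)
    dsimp only
    rw [hDnew, hDold]
    omega
  · constructor
    · intro C hC
      rcases Multiset.mem_cons.mp hC with rfl | hC
      · exact hACL
      · exact hsub.1 _ hC
    · intro C hC
      rcases Multiset.mem_cons.mp hC with rfl | hC
      · exact hBCL
      · exact hsub.2 _ (Multiset.mem_of_mem_erase hC)

lemma measure_boxL {S₀ : Sequent} {Γ Δ : Multiset Formula} {B : Formula}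
    (hsub : SubCL S₀ (Γ, Δ)) (hm : Formula.box B ∈ Δ) :
    Msr S₀ (Γ, B ::ₘ Δ.erase (.box B)) < Msr S₀ (Γ, Δ) ∧
      SubCL S₀ (Γ, B ::ₘ Δ.erase (.box B)) := by
  have hmCL : Formula.box B ∈ CL S₀ := hsub.2 _ hm
  have hBCL : B ∈ CL S₀ := CL_closed hmCL (subf_box_mem B)
  have hΓ : ∀ C ∈ Γ, TW Γ (B ::ₘ Δ.erase (.box B)) C := fun C hC => mem_TW hC
  have hΔ : ∀ C ∈ Δ, FW Γ (B ::ₘ Δ.erase (.box B)) C := by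
    intro C hC
    rcases mem_erase_cases (D := .box B) hC with h' | rfl
    · exact mem_FW (Multiset.mem_cons_of_mem h')
    · exact FW_box_of (mem_FW (Multiset.mem_cons_self _ _))
  have hU : U S₀ Γ (B ::ₘ Δ.erase (.box B)) ≤ U S₀ Γ Δ := U_le hΓ hΔ
  constructor
  · unfold Msr
    have hDold : Dw Δ = 3 ^ fsize (Formula.box B) + Dw (Δ.erase (.box B)) := Dw_erase hm
    have hDnew : Dw (B ::ₘ Δ.erase (.box B)) = 3 ^ fsize B + Dw (Δ.erase (.box B)) :=
      Dw_cons _ _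
    have hpow : (3:ℕ) ^ fsize B < 3 ^ fsize (Formula.box B) := pow3_lt (fsize_lt_box B)
    have hmul : Wt S₀ * U S₀ Γ (B ::ₘ Δ.erase (.box B)) ≤ Wt S₀ * U S₀ Γ Δ :=
      Nat.mul_le_mul_left _ hU
    dsimp only
    rw [hDnew, hDold]
    omega
  · refine ⟨hsub.1, ?_⟩
    intro C hC
    rcases Multiset.mem_cons.mp hC with rfl | hC
    · exact hBCL
    · exact hsub.2 _ (Multiset.mem_of_mem_erase hC)

lemma sub_boxR {S₀ : Sequent} {Γ Δ : Multiset Formula} {B : Formula}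
    (hsub : SubCL S₀ (Γ, Δ)) (hm : Formula.box B ∈ Δ) :
    SubCL S₀ (boxPart Γ, ({B} : Multiset Formula)) := by
  have hmCL : Formula.box B ∈ CL S₀ := hsub.2 _ hm
  have hBCL : B ∈ CL S₀ := CL_closed hmCL (subf_box_mem B)
  constructor
  · intro C hC
    exact hsub.1 _ (Multiset.mem_filter.mp hC).1
  · intro C hC
    rw [Multiset.mem_singleton.mp hC]
    exact hBCL

lemma trans_child_measure {S₀ : Sequent} {s : Sequent} {r : Rule} {ch : Bool → Option Sequent}
    (hsub : SubCL S₀ s) (h : trans s = some (r, ch)) :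
    ∀ b s', ch b = some s' →
      (Msr S₀ s' < Msr S₀ s ∨ (r = Rule.box ∧ b = true)) ∧ SubCL S₀ s' := by
  obtain ⟨Γ, Δ⟩ := s
  unfold trans at h
  split_ifs at h with h1 h2 h3 h4 h5 h6 <;>
    (simp only [Option.some.injEq, Prod.mk.injEq] at h; obtain ⟨rfl, rfl⟩ := h) <;>
    intro b s' hb
  · simp at hb
  · simp at hb
  · obtain ⟨hm, hob⟩ := h3.choose_spec.choose_spec
    cases b
    · simp only [if_neg (by simp : ¬ (false = true))] at hb
      rw [← Option.some.inj hb]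
      have := measure_impL_left (A := h3.choose) (B := h3.choose_spec.choose) hsub hm hob
      exact ⟨Or.inl this.1, this.2⟩
    · simp only [if_pos rfl] at hb
      rw [← Option.some.inj hb]
      have := measure_impL_right (A := h3.choose) (B := h3.choose_spec.choose) hsub hm hob
      exact ⟨Or.inl this.1, this.2⟩
  · obtain ⟨hm, hob⟩ := h4.choose_spec
    cases b
    · simp only [if_neg (by simp : ¬ (false = true))] at hb
      rw [← Option.some.inj hb]
      have := measure_refl (B := h4.choose) hsub hm hob
      exact ⟨Or.inl this.1, this.2⟩
    · simp at hb
  · obtain ⟨hm, hob⟩ := h5.choose_spec.choose_spec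
    cases b
    · simp only [if_neg (by simp : ¬ (false = true))] at hb
      rw [← Option.some.inj hb]
      have := measure_impR (A := h5.choose) (B := h5.choose_spec.choose) hsub hm hob
      exact ⟨Or.inl this.1, this.2⟩
    · simp at hb
  · obtain ⟨hm, -⟩ := h6.choose_spec
    cases b
    · simp only [if_neg (by simp : ¬ (false = true))] at hb
      rw [← Option.some.inj hb]
      have := measure_boxL (B := h6.choose) hsub hm
      exact ⟨Or.inl this.1, this.2⟩
    · simp only [if_pos rfl] at hb
      rw [← Option.some.inj hb]
      exact ⟨Or.inr ⟨rfl, rfl⟩, sub_boxR (B := h6.choose) hsub hm⟩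

end CE
namespace CE

/-! ### running the search automaton along addresses -/

noncomputable def childS (s : Sequent) (b : Bool) : Option Sequent :=
  (trans s).bind (fun t => t.2 b)

noncomputable def runFrom : List Bool → Sequent → Option Sequent
  | [], s => some s
  | b :: a, s => (childS s b).bind (runFrom a)

lemma runFrom_append (a : List Bool) (b : Bool) (s : Sequent) :
    runFrom (a ++ [b]) s = (runFrom a s).bind (fun s' => childS s' b) := by
  induction a generalizing s with
  | nil =>
      show (childS s b).bind (runFrom []) = (some s).bind (fun s' => childS s' b)
      rw [Option.bind_some]
      cases childS s b <;> rfl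
  | cons x a ih =>
      show (childS s x).bind (runFrom (a ++ [b])) = (runFrom (x :: a) s).bind _
      cases hc : childS s x with
      | none => simp [runFrom, hc]
      | some s₁ => simp [runFrom, hc, ih]

noncomputable def searchLab (S₀ : Sequent) : Lab :=
  fun a => (runFrom a S₀).bind (fun s => (trans s).map (fun t => (t.1, s)))

lemma searchLab_eq {S₀ : Sequent} {a : List Bool} {r : Rule} {s : Sequent}
    (h : searchLab S₀ a = some (r, s)) :
    runFrom a S₀ = some s ∧ ∃ ch, trans s = some (r, ch) := by
  unfold searchLab at h
  cases hra : runFrom a S₀ with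
  | none => rw [hra] at h; simp at h
  | some s₁ =>
      rw [hra] at h
      simp only [Option.bind_some] at h
      cases htr : trans s₁ with
      | none => rw [htr] at h; simp at h
      | some t =>
          rw [htr] at h
          simp only [Option.map_some, Option.some.injEq, Prod.mk.injEq] at h
          obtain ⟨h1, h2⟩ := h
          subst h1; subst h2
          exact ⟨rfl, t.2, by rw [htr]⟩

lemma searchLab_some {S₀ : Sequent} {a : List Bool} {s : Sequent}
    (hra : runFrom a S₀ = some s) {r : Rule} {ch : Bool → Option Sequent}
    (htr : trans s = some (r, ch)) : searchLab S₀ a = some (r, s) := by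
  unfold searchLab
  rw [hra, Option.bind_some, htr]
  rfl

lemma run_valid {S₀ : Sequent} (hval : Valid S₀) :
    ∀ (a : List Bool) {s' : Sequent}, runFrom a S₀ = some s' → Valid s' := by
  suffices H : ∀ (a : List Bool) (s : Sequent), Valid s →
      ∀ {s' : Sequent}, runFrom a s = some s' → Valid s' by
    intro a s' h
    exact H a S₀ hval h
  intro a
  induction a with
  | nil => intro s hv s' h; rw [← Option.some.inj h]; exact hv
  | cons b a ih =>
      intro s hv s' h
      show Valid s'
      unfold runFrom at h
      cases hc : childS s b with
      | none => rw [hc] at h; simp at h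
      | some s₁ =>
          rw [hc] at h
          simp only [Option.bind_some] at h
          have hv₁ : Valid s₁ := by
            unfold childS at hc
            cases htr : trans s with
            | none => rw [htr] at hc; simp at hc
            | some t =>
                rw [htr] at hc
                simp only [Option.bind_some] at hc
                have htr' : trans s = some (t.1, t.2) := by rw [htr]
                exact trans_child_valid htr' hv b s₁ hc
          exact ih s₁ hv₁ h

lemma sub_init (S₀ : Sequent) : SubCL S₀ S₀ := by
  constructor
  · intro C hC
    exact Finset.mem_biUnion.mpr ⟨C, Multiset.mem_toFinset.mpr (Multiset.mem_add.mpr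
      (Or.inl hC)), self_mem_subf C⟩
  · intro C hC
    exact Finset.mem_biUnion.mpr ⟨C, Multiset.mem_toFinset.mpr (Multiset.mem_add.mpr
      (Or.inr hC)), self_mem_subf C⟩

/-! ### the cut-free ∞-proof produced by the search -/

noncomputable def searchProof (S₀ : Sequent) (hval : Valid S₀) : InfProof where
  lab := searchLab S₀
  root_some := by
    have h := trans_fire hval
    cases htr : trans S₀ with
    | none => rw [htr] at h; simp at h
    | some t =>
        have : searchLab S₀ [] = some (t.1, S₀) :=
          searchLab_some (by rfl) (by rw [htr])
        rw [this]; rfl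
  nojunk := by
    intro a i h
    unfold searchLab at h ⊢
    rw [runFrom_append]
    cases hra : runFrom a S₀ with
    | none => simp
    | some s =>
        rw [hra] at h
        simp only [Option.bind_some] at h ⊢
        cases htr : trans s with
        | none => unfold childS; rw [htr]; simp
        | some t => rw [htr] at h; simp at h
  step := by
    intro a r s h
    obtain ⟨hra, ch, htr⟩ := searchLab_eq h
    have key : ∀ i : Bool, (searchLab S₀ (a ++ [i])).map Prod.snd = ch i := by
      intro i
      have hrun : runFrom (a ++ [i]) S₀ = ch i := by
        rw [runFrom_append, hra, Option.bind_some]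
        unfold childS
        rw [htr]
        rfl
      cases hci : ch i with
      | none =>
          unfold searchLab
          rw [hrun, hci]
          rfl
      | some s' =>
          have hv' : Valid s' := by
            have : runFrom (a ++ [i]) S₀ = some s' := by rw [hrun, hci]
            exact run_valid hval _ this
          have hf := trans_fire hv'
          cases htr' : trans s' with
          | none => rw [htr'] at hf; simp at hf
          | some t' =>
              have : searchLab S₀ (a ++ [i]) = some (t'.1, s') :=
                searchLab_some (by rw [hrun, hci]) (by rw [htr'])
              rw [this]
              rfl
    rw [key false, key true]
    exact trans_inst htr
  branch := by
    intro f hall N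
    -- the sequents along the branch
    have hs : ∀ n, ∃ p : Rule × Sequent, searchLab S₀ ((List.range n).map f) = some p := by
      intro n
      have := hall n
      cases hl : searchLab S₀ ((List.range n).map f) with
      | none => rw [hl] at this; simp at this
      | some p => exact ⟨p, rfl⟩
    choose pf hpf using hs
    have hrun : ∀ n, runFrom ((List.range n).map f) S₀ = some (pf n).2 ∧
        ∃ ch, trans (pf n).2 = some ((pf n).1, ch) := by
      intro n
      have := searchLab_eq (by rw [hpf n])
      exact this
    have hch : ∀ n, ∃ ch, trans (pf n).2 = some ((pf n).1, ch) ∧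
        ch (f n) = some (pf (n+1)).2 := by
      intro n
      obtain ⟨hr1, ch, htr⟩ := hrun n
      refine ⟨ch, htr, ?_⟩
      have hr2 := (hrun (n+1)).1
      rw [List.range_succ, List.map_append] at hr2
      simp only [List.map_cons, List.map_nil] at hr2
      rw [runFrom_append, hr1, Option.bind_some] at hr2
      unfold childS at hr2
      rw [htr, Option.bind_some] at hr2
      exact hr2
    have hsub : ∀ n, SubCL S₀ (pf n).2 := by
      intro n
      induction n with
      | zero =>
          have h0 := (hrun 0).1
          have : (pf 0).2 = S₀ := by
            simp only [List.range_zero, List.map_nil] at h0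
            exact (Option.some.inj h0).symm
          rw [this]
          exact sub_init S₀
      | succ n ih =>
          obtain ⟨ch, htr, hc⟩ := hch n
          exact (trans_child_measure ih htr (f n) _ hc).2
    have hdec : ∀ n, Msr S₀ (pf (n+1)).2 < Msr S₀ (pf n).2 ∨ ((pf n).1 = Rule.box ∧ f n = true) := by
      intro n
      obtain ⟨ch, htr, hc⟩ := hch n
      exact (trans_child_measure (hsub n) htr (f n) _ hc).1
    have hrule : ∀ n, (searchLab S₀ ((List.range n).map f)).map Prod.fst = some (pf n).1 := by
      intro n
      rw [hpf n]
      rfl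
    have main : ∀ (m N' : ℕ), Msr S₀ (pf N').2 ≤ m →
        ∃ n, N' ≤ n ∧ f n = true ∧
          (searchLab S₀ ((List.range n).map f)).map Prod.fst = some Rule.box := by
      intro m
      induction m with
      | zero =>
          intro N' hm
          rcases hdec N' with h | ⟨hbox, hft⟩
          · omega
          · exact ⟨N', le_refl _, hft, by rw [hrule N', hbox]⟩
      | succ m ih =>
          intro N' hm
          rcases hdec N' with h | ⟨hbox, hft⟩
          · obtain ⟨n, hn1, hn2, hn3⟩ := ih (N' + 1) (by omega)
            exact ⟨n, by omega, hn2, hn3⟩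
          · exact ⟨N', le_refl _, hft, by rw [hrule N', hbox]⟩
    exact main (Msr S₀ (pf N).2) N (le_refl _)

lemma completeness (S : Sequent) (hval : Valid S) :
    ∃ π : InfProof, NoCut π ∧ Proves π S := by
  refine ⟨searchProof S hval, ?_, ?_⟩
  · intro a r s h
    obtain ⟨-, ch, htr⟩ := searchLab_eq (S₀ := S) h
    exact trans_ne_cut htr
  · have h := trans_fire hval
    cases htr : trans S with
    | none => rw [htr] at h; simp at h
    | some t =>
        refine ⟨t.1, ?_⟩
        show searchLab S [] = some (t.1, S)
        exact searchLab_some (show runFrom [] S = some S from rfl) (by rw [htr])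

end CE

/-- cut elimination: any sequent provable in Grz∞ + cut is provable in
Grz∞ (without cut). -/
theorem cut_elimination (S : Sequent) :
    (∃ π : InfProof, Proves π S) → ∃ π : InfProof, NoCut π ∧ Proves π S := by
  rintro ⟨π, hπ⟩
  exact CE.completeness S (CE.soundness π S hπ)
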